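/- Let H ∈ ℤ^{d×n} be in the block HNF form above, with the additional property that every n×n sub-matrix of H is nonsingular. If n > Δ^{3+2log₂3} + log₂ Δ, where Δ is the maximal absolute value of n×n minors of H, then d ≤ n + 1 (H has at most n+1 rows). -/

import Mathlib

open Matrix Real


section Aux
variable {ι : Type*} [Fintype ι] [DecidableEq ι] {R : Type*} [CommRing R]

lemma det_updateRow_finset_sum (M : Matrix ι ι R) (c : ι) {α : Type*} (S : Finset α)
    (w : α → ι → R) :
    (M.updateRow c (∑ i ∈ S, w i)).det = ∑ i ∈ S, (M.updateRow c (w i)).det := by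
  classical
  induction S using Finset.induction_on with
  | empty =>
      simp only [Finset.sum_empty]
      exact Matrix.det_eq_zero_of_row_eq_zero c (by simp)
  | insert _ _ h ih =>
      rw [Finset.sum_insert h, Matrix.det_updateRow_add, ih, Finset.sum_insert h]

lemma det_updateRow_expand (M : Matrix ι ι R) (c : ι) (v : ι → R) :
    (M.updateRow c v).det = ∑ i, v i * (M.updateRow c (Pi.single i 1)).det := by
  conv_lhs => rw [← Finset.univ_sum_single v]
  rw [det_updateRow_finset_sum]
  refine Finset.sum_congr rfl fun i _ => ?_
  have hsingle : Pi.single i (v i) = v i • (Pi.single i (1 : R) : ι → R) := by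
    funext j
    by_cases h : j = i <;> simp [Pi.single_apply, h]
  rw [hsingle, Matrix.det_updateRow_smul]

lemma one_updateRow_single_self (c : ι) :
    (1 : Matrix ι ι R).updateRow c (Pi.single c 1) = 1 := by
  ext i j
  by_cases h : i = c
  · subst h; simp [Matrix.updateRow_apply, Pi.single_apply, Matrix.one_apply, eq_comm]
  · simp [Matrix.updateRow_apply, h]

lemma det_one_updateRow (c : ι) (v : ι → R) :
    ((1 : Matrix ι ι R).updateRow c v).det = v c := by
  rw [det_updateRow_expand]
  rw [Finset.sum_eq_single c]
  · rw [one_updateRow_single_self, Matrix.det_one, mul_one]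
  · intro i _ hne
    have hrow : ((1 : Matrix ι ι R).updateRow c (Pi.single i 1)) c
        = ((1 : Matrix ι ι R).updateRow c (Pi.single i 1)) i := by
      funext j
      simp [Matrix.updateRow_apply, hne, Matrix.one_apply, Pi.single_apply, eq_comm]
    rw [Matrix.det_zero_of_row_eq (Ne.symm hne) hrow, mul_zero]
  · simp

lemma updateRow_comm' (M : Matrix ι ι R) {c c' : ι} (h : c ≠ c') (u v : ι → R) :
    (M.updateRow c u).updateRow c' v = (M.updateRow c' v).updateRow c u := by
  ext i j
  by_cases h1 : i = c' <;> by_cases h2 : i = c <;>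
    simp_all [Matrix.updateRow_apply]

lemma swap_matrix_det {c c' : ι} (h : c ≠ c') :
    (((1 : Matrix ι ι R).updateRow c' (Pi.single c 1)).updateRow c
      (Pi.single c' 1)).det = -1 := by
  have : ((1 : Matrix ι ι R).updateRow c' (Pi.single c 1)).updateRow c (Pi.single c' 1)
      = (Equiv.swap c c').permMatrix R := by
    ext i j
    by_cases h1 : i = c <;> by_cases h2 : i = c' <;>
      simp_all [Matrix.updateRow_apply, Equiv.Perm.permMatrix, PEquiv.toMatrix,
        Equiv.toPEquiv_apply, Equiv.swap_apply_def, Pi.single_apply, Matrix.one_apply,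
        eq_comm]
  rw [this, Matrix.det_permutation, Equiv.Perm.sign_swap h]
  simp

lemma det_one_updateRow_two {c c' : ι} (h : c ≠ c') (u v : ι → R) :
    (((1 : Matrix ι ι R).updateRow c u).updateRow c' v).det
      = u c * v c' - u c' * v c := by
  rw [det_updateRow_expand]
  have hzero : ∀ i ∈ Finset.univ, i ∉ ({c, c'} : Finset ι) →
      v i * (((1 : Matrix ι ι R).updateRow c u).updateRow c' (Pi.single i 1)).det = 0 := by
    intro i _ hi
    simp only [Finset.mem_insert, Finset.mem_singleton, not_or] at hi
    obtain ⟨hic, hic'⟩ := hi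
    have hrow : (((1 : Matrix ι ι R).updateRow c u).updateRow c' (Pi.single i 1)) c'
        = (((1 : Matrix ι ι R).updateRow c u).updateRow c' (Pi.single i 1)) i := by
      funext j
      simp [Matrix.updateRow_apply, hic, hic', Ne.symm hic', Matrix.one_apply,
        Pi.single_apply, eq_comm]
    rw [Matrix.det_zero_of_row_eq (Ne.symm hic') hrow, mul_zero]
  rw [← Finset.sum_subset (Finset.subset_univ ({c, c'} : Finset ι)) hzero]
  rw [Finset.sum_pair h]
  have hc' : (((1 : Matrix ι ι R).updateRow c u).updateRow c' (Pi.single c' 1)).det = u c := by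
    have : ((1 : Matrix ι ι R).updateRow c u).updateRow c' (Pi.single c' 1)
        = (1 : Matrix ι ι R).updateRow c u := by
      ext i j
      by_cases h1 : i = c' <;>
        simp_all [Matrix.updateRow_apply, Ne.symm h, Pi.single_apply, Matrix.one_apply, eq_comm]
    rw [this, det_one_updateRow]
  have hc : (((1 : Matrix ι ι R).updateRow c u).updateRow c' (Pi.single c 1)).det = -u c' := by
    rw [updateRow_comm' _ h]
    rw [det_updateRow_expand]
    have hz2 : ∀ i ∈ Finset.univ, i ≠ c' →
        u i * (((1 : Matrix ι ι R).updateRow c' (Pi.single c 1)).updateRow c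
          (Pi.single i 1)).det = 0 := by
      intro i _ hi
      by_cases hic : i = c
      · subst hic
        have hrow : (((1 : Matrix ι ι R).updateRow c' (Pi.single i 1)).updateRow i
            (Pi.single i 1)) i
            = (((1 : Matrix ι ι R).updateRow c' (Pi.single i 1)).updateRow i
            (Pi.single i 1)) c' := by
          funext j; simp [Matrix.updateRow_apply, Ne.symm h]
        rw [Matrix.det_zero_of_row_eq h hrow, mul_zero]
      · have hrow : (((1 : Matrix ι ι R).updateRow c' (Pi.single c 1)).updateRow c
            (Pi.single i 1)) c
            = (((1 : Matrix ι ι R).updateRow c' (Pi.single c 1)).updateRow c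
            (Pi.single i 1)) i := by
          funext j
          simp [Matrix.updateRow_apply, hic, hi, Ne.symm hic, Matrix.one_apply,
            Pi.single_apply, eq_comm]
        rw [Matrix.det_zero_of_row_eq (Ne.symm hic) hrow, mul_zero]
    rw [Finset.sum_eq_single c' (fun i hi hne => hz2 i hi hne) (by simp)]
    rw [swap_matrix_det h]
    ring
  rw [hc', hc]
  ring

lemma updateRow_mul' (M N : Matrix ι ι R) (c : ι) (v : ι → R) :
    (M.updateRow c v) * N = (M * N).updateRow c (Matrix.vecMul v N) := by
  ext i j
  by_cases h : i = c
  · subst h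
    simp [Matrix.mul_apply, Matrix.vecMul, dotProduct]
  · simp [Matrix.mul_apply, h]

end Aux

/-- Data of an integer matrix in the permuted block Hermite normal form of the paper:
top `k` rows are `(I_k 0)`, middle `s` rows are `(A B)` with `B` lower triangular with
positive diagonal, entries `0 ≤ a_{ij} ≤ b_{ii}` and `0 ≤ b_{ij} ≤ b_{ii}`, and `m`
extra rows `(Ā B̄)`.  Here `n = k + s` and `d = k + s + m`. -/
structure BlockHNF (k s m : ℕ) where
  A : Matrix (Fin s) (Fin k) ℤ
  B : Matrix (Fin s) (Fin s) ℤ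
  Abar : Matrix (Fin m) (Fin k) ℤ
  Bbar : Matrix (Fin m) (Fin s) ℤ
  Bdiag_pos : ∀ i, 0 < B i i
  B_upper_zero : ∀ i j : Fin s, i < j → B i j = 0
  A_nonneg : ∀ i j, 0 ≤ A i j
  A_le_diag : ∀ i j, A i j ≤ B i i
  B_nonneg : ∀ i j : Fin s, j ≤ i → 0 ≤ B i j
  B_le_diag : ∀ i j : Fin s, j ≤ i → B i j ≤ B i i

/-- The full `d × n` matrix `H` determined by the block HNF data. -/
def BlockHNF.H {k s m : ℕ} (D : BlockHNF k s m) :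
    Matrix ((Fin k ⊕ Fin s) ⊕ Fin m) (Fin k ⊕ Fin s) ℤ :=
  Matrix.of fun r c =>
    match r, c with
    | Sum.inl (Sum.inl i), Sum.inl j => if i = j then 1 else 0
    | Sum.inl (Sum.inl _), Sum.inr _ => 0
    | Sum.inl (Sum.inr i), Sum.inl j => D.A i j
    | Sum.inl (Sum.inr i), Sum.inr j => D.B i j
    | Sum.inr i, Sum.inl j => D.Abar i j
    | Sum.inr i, Sum.inr j => D.Bbar i j

/-- `Δ` is the maximal absolute value of the `n × n` minors of `H`
(submatrices obtained by choosing `n` of the `d` rows). -/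
def BlockHNF.IsMaxMinor {k s m : ℕ} (D : BlockHNF k s m) (Δ : ℤ) : Prop :=
  IsGreatest {v : ℤ | ∃ f : (Fin k ⊕ Fin s) → ((Fin k ⊕ Fin s) ⊕ Fin m),
    Function.Injective f ∧ v = |(Matrix.of fun i j => D.H (f i) j).det|} Δ


section Key

variable {k s m : ℕ} (D : BlockHNF k s m)

/-- The top `n × n` block of `H`. -/
def Tmat : Matrix (Fin k ⊕ Fin s) (Fin k ⊕ Fin s) ℤ := Matrix.fromBlocks 1 0 D.A D.B

lemma H_inl : ∀ p q, D.H (Sum.inl p) q = Tmat D p q := by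
  rintro (p | p) (q | q) <;> rfl

lemma Tmat_det : (Tmat D).det = ∏ r, D.B r r := by
  rw [Tmat, Matrix.det_fromBlocks_zero₁₂, Matrix.det_one, one_mul]
  exact Matrix.det_of_lowerTriangular _
    (fun i j hij => D.B_upper_zero i j (OrderDual.toDual_lt_toDual.mp hij))

lemma Tmat_pos : 0 < (Tmat D).det := by
  rw [Tmat_det]
  exact Finset.prod_pos fun r _ => D.Bdiag_pos r

/-- The rational top block. -/
def Tq : Matrix (Fin k ⊕ Fin s) (Fin k ⊕ Fin s) ℚ := (Tmat D).map (Int.castRingHom ℚ)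

lemma det_map_int {ι : Type*} [Fintype ι] [DecidableEq ι] (M : Matrix ι ι ℤ) :
    (M.map (Int.castRingHom ℚ)).det = (M.det : ℚ) := by
  rw [show M.map (Int.castRingHom ℚ) = (Int.castRingHom ℚ).mapMatrix M from rfl,
    ← RingHom.map_det]
  simp

lemma Tq_det : (Tq D).det = ((Tmat D).det : ℚ) := by
  rw [Tq, det_map_int]

lemma Tq_det_ne : (Tq D).det ≠ 0 := by
  rw [Tq_det]
  exact_mod_cast (Tmat_pos D).ne'

/-- An extra row of `H`. -/
def hrow (l : Fin m) : (Fin k ⊕ Fin s) → ℤ := fun q => D.H (Sum.inr l) q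

/-- The extra row over `ℚ`. -/
def hrowq (l : Fin m) : (Fin k ⊕ Fin s) → ℚ := fun q => ((hrow D l q : ℤ) : ℚ)

/-- The coefficients of an extra row w.r.t. the rows of the top block. -/
noncomputable def gq (l : Fin m) : (Fin k ⊕ Fin s) → ℚ := Matrix.vecMul (hrowq D l) (Tq D)⁻¹

lemma gq_vecMul (l : Fin m) : Matrix.vecMul (gq D l) (Tq D) = hrowq D l := by
  rw [gq, Matrix.vecMul_vecMul,
    Matrix.nonsing_inv_mul _ (isUnit_iff_ne_zero.mpr (Tq_det_ne D)), Matrix.vecMul_one]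

lemma map_updateRow_int (M : Matrix (Fin k ⊕ Fin s) (Fin k ⊕ Fin s) ℤ) (c) (v) :
    (M.updateRow c v).map (Int.castRingHom ℚ)
      = (M.map (Int.castRingHom ℚ)).updateRow c (fun q => ((v q : ℤ) : ℚ)) := by
  ext i j
  by_cases h : i = c <;> simp [Matrix.map_apply, Matrix.updateRow_apply, h]

lemma key_single (l : Fin m) (c : Fin k ⊕ Fin s) :
    (((Tmat D).updateRow c (hrow D l)).det : ℚ) = gq D l c * (Tq D).det := by
  have h1 : (((Tmat D).updateRow c (hrow D l)).det : ℚ)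
      = (((Tmat D).updateRow c (hrow D l)).map (Int.castRingHom ℚ)).det :=
    (det_map_int _).symm
  rw [h1, map_updateRow_int]
  have h2 : ((Tq D).updateRow c (fun q => ((hrow D l q : ℤ) : ℚ)))
      = ((1 : Matrix (Fin k ⊕ Fin s) (Fin k ⊕ Fin s) ℚ).updateRow c (gq D l)) * Tq D := by
    rw [updateRow_mul', Matrix.one_mul, gq_vecMul]
    rfl
  rw [Tq] at h2
  rw [h2, Matrix.det_mul, det_one_updateRow, Tq]

lemma key_pair {c c' : Fin k ⊕ Fin s} (hcc' : c ≠ c') (a b : Fin m) :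
    ((((Tmat D).updateRow c (hrow D a)).updateRow c' (hrow D b)).det : ℚ)
      = (gq D a c * gq D b c' - gq D a c' * gq D b c) * (Tq D).det := by
  have h1 : ((((Tmat D).updateRow c (hrow D a)).updateRow c' (hrow D b)).det : ℚ)
      = ((((Tmat D).updateRow c (hrow D a)).updateRow c' (hrow D b)).map
          (Int.castRingHom ℚ)).det :=
    (det_map_int _).symm
  rw [h1, map_updateRow_int, map_updateRow_int]
  have h2 : (((Tq D).updateRow c (fun q => ((hrow D a q : ℤ) : ℚ))).updateRow c'
        (fun q => ((hrow D b q : ℤ) : ℚ)))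
      = (((1 : Matrix (Fin k ⊕ Fin s) (Fin k ⊕ Fin s) ℚ).updateRow c (gq D a)).updateRow c'
          (gq D b)) * Tq D := by
    rw [updateRow_mul', updateRow_mul', Matrix.one_mul, gq_vecMul, gq_vecMul]
    rfl
  rw [Tq] at h2
  rw [h2, Matrix.det_mul, det_one_updateRow_two hcc', Tq]

/-- The row selection replacing row `c` of the top block by extra row `l`. -/
def sel1 (c : Fin k ⊕ Fin s) (l : Fin m) : (Fin k ⊕ Fin s) → (Fin k ⊕ Fin s) ⊕ Fin m :=
  fun p => if p = c then Sum.inr l else Sum.inl p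

lemma sel1_inj (c : Fin k ⊕ Fin s) (l : Fin m) : Function.Injective (sel1 c l) := by
  intro x y h
  unfold sel1 at h
  by_cases hx : x = c <;> by_cases hy : y = c <;> simp_all

lemma of_sel1 (c : Fin k ⊕ Fin s) (l : Fin m) :
    (Matrix.of fun p q => D.H (sel1 c l p) q) = (Tmat D).updateRow c (hrow D l) := by
  ext p q
  by_cases hp : p = c <;> simp [sel1, hp, Matrix.updateRow_apply, hrow, H_inl]

/-- The row selection replacing rows `c, c'` of the top block by extra rows `a, b`. -/
def sel2 (c c' : Fin k ⊕ Fin s) (a b : Fin m) :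
    (Fin k ⊕ Fin s) → (Fin k ⊕ Fin s) ⊕ Fin m :=
  fun p => if p = c then Sum.inr a else if p = c' then Sum.inr b else Sum.inl p

lemma sel2_inj {c c' : Fin k ⊕ Fin s} {a b : Fin m} (hcc' : c ≠ c') (hab : a ≠ b) :
    Function.Injective (sel2 c c' a b) := by
  intro x y h
  unfold sel2 at h
  by_cases hx : x = c <;> by_cases hy : y = c <;> by_cases hx' : x = c' <;>
    by_cases hy' : y = c' <;> simp_all

lemma of_sel2 {c c' : Fin k ⊕ Fin s} (hcc' : c ≠ c') (a b : Fin m) :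
    (Matrix.of fun p q => D.H (sel2 c c' a b p) q)
      = ((Tmat D).updateRow c (hrow D a)).updateRow c' (hrow D b) := by
  ext p q
  by_cases hp : p = c <;> by_cases hp' : p = c' <;>
    simp_all [sel2, Matrix.updateRow_apply, hrow, H_inl]

end Key

/-- if every `n × n` sub-matrix of `H` (block HNF, `n = k + s`,
`d = n + m`) is nonsingular and `n > Δ^{3 + 2·log₂3} + log₂ Δ`, then `H` has at most
`n + 1` rows, i.e. `m ≤ 1`. -/
theorem stmt11 (k s m : ℕ) (D : BlockHNF k s m) (Δ : ℤ) (hΔ : D.IsMaxMinor Δ)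
    (hns : ∀ f : (Fin k ⊕ Fin s) → ((Fin k ⊕ Fin s) ⊕ Fin m),
      Function.Injective f → (Matrix.of fun i j => D.H (f i) j).det ≠ 0)
    (hn : ((k + s : ℕ) : ℝ) >
      (Δ : ℝ) ^ ((3 : ℝ) + 2 * Real.logb 2 3) + Real.logb 2 Δ) :
    m ≤ 1 := by
  by_contra hm
  push_neg at hm
  classical
  obtain ⟨hΔmem, hΔub⟩ := hΔ
  have hTpos := Tmat_pos D
  have hofT : (Matrix.of fun i j => D.H (Sum.inl i) j) = Tmat D := by
    ext p q; exact H_inl D p q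
  have hTle : (Tmat D).det ≤ Δ := by
    have h := hΔub ⟨Sum.inl, Sum.inl_injective, rfl⟩
    rw [hofT] at h
    exact le_trans (le_abs_self _) h
  have hΔ1 : 1 ≤ Δ := le_trans hTpos hTle
  set a : Fin m := ⟨0, by omega⟩ with ha
  set b : Fin m := ⟨1, by omega⟩ with hb
  have hab : a ≠ b := by simp [ha, hb, Fin.ext_iff]
  have hδne : ∀ (l : Fin m) c, ((Tmat D).updateRow c (hrow D l)).det ≠ 0 := by
    intro l c
    have h := hns (sel1 c l) (sel1_inj c l)
    rwa [of_sel1] at h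
  have hδle : ∀ (l : Fin m) c, |((Tmat D).updateRow c (hrow D l)).det| ≤ Δ := by
    intro l c
    have h := hΔub ⟨sel1 c l, sel1_inj c l, rfl⟩
    rwa [of_sel1] at h
  have hpairne : ∀ {c c' : Fin k ⊕ Fin s}, c ≠ c' →
      (((Tmat D).updateRow c (hrow D a)).updateRow c' (hrow D b)).det ≠ 0 := by
    intro c c' hcc'
    have h := hns (sel2 c c' a b) (sel2_inj hcc' hab)
    rwa [of_sel2 D hcc'] at h
  have hpairle : ∀ {c c' : Fin k ⊕ Fin s}, c ≠ c' →
      |(((Tmat D).updateRow c (hrow D a)).updateRow c' (hrow D b)).det| ≤ Δ := by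
    intro c c' hcc'
    have h := hΔub ⟨sel2 c c' a b, sel2_inj hcc' hab, rfl⟩
    rwa [of_sel2 D hcc'] at h
  have hkey : ∀ {c c' : Fin k ⊕ Fin s}, c ≠ c' →
      (((Tmat D).updateRow c (hrow D a)).updateRow c' (hrow D b)).det * (Tmat D).det
        = ((Tmat D).updateRow c (hrow D a)).det * ((Tmat D).updateRow c' (hrow D b)).det
          - ((Tmat D).updateRow c' (hrow D a)).det * ((Tmat D).updateRow c (hrow D b)).det := by
    intro c c' hcc'
    have hq := key_pair D hcc' a b
    have h1 := key_single D a c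
    have h2 := key_single D b c'
    have h3 := key_single D a c'
    have h4 := key_single D b c
    have hQ : ((((Tmat D).updateRow c (hrow D a)).updateRow c' (hrow D b)).det * (Tmat D).det : ℚ)
        = (((Tmat D).updateRow c (hrow D a)).det * ((Tmat D).updateRow c' (hrow D b)).det
          - ((Tmat D).updateRow c' (hrow D a)).det * ((Tmat D).updateRow c (hrow D b)).det : ℚ) := by
      rw [hq, h1, h2, h3, h4, ← Tq_det]
      ring
    exact_mod_cast hQ
  set φ : (Fin k ⊕ Fin s) → ℤ × ℤ := fun c =>
    (((Tmat D).updateRow c (hrow D a)).det, ((Tmat D).updateRow c (hrow D b)).det) with hφ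
  have hφinj : Function.Injective φ := by
    intro c c' hcc
    by_contra hne
    have h1 : ((Tmat D).updateRow c (hrow D a)).det = ((Tmat D).updateRow c' (hrow D a)).det :=
      congrArg Prod.fst hcc
    have h2 : ((Tmat D).updateRow c (hrow D b)).det = ((Tmat D).updateRow c' (hrow D b)).det :=
      congrArg Prod.snd hcc
    have hk := hkey hne
    rw [h1, h2] at hk
    have h0 : (((Tmat D).updateRow c (hrow D a)).updateRow c' (hrow D b)).det * (Tmat D).det
        = 0 := by rw [hk]; ring
    rcases mul_eq_zero.mp h0 with h | h
    · exact hpairne hne h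
    · exact hTpos.ne' h
  have hmaps : ∀ c ∈ (Finset.univ : Finset (Fin k ⊕ Fin s)),
      φ c ∈ ((Finset.Icc (-Δ) Δ).erase 0) ×ˢ ((Finset.Icc (-Δ) Δ).erase 0) := by
    intro c _
    have l1 := abs_le.mp (hδle a c)
    have l2 := abs_le.mp (hδle b c)
    simp only [hφ, Finset.mem_product, Finset.mem_erase, Finset.mem_Icc]
    exact ⟨⟨hδne a c, l1.1, l1.2⟩, ⟨hδne b c, l2.1, l2.2⟩⟩
  have hcard := Finset.card_le_card_of_injOn φ hmaps hφinj.injOn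
  rw [Finset.card_univ, Fintype.card_sum, Fintype.card_fin, Fintype.card_fin,
    Finset.card_product] at hcard
  have hScard : ((Finset.Icc (-Δ) Δ).erase 0).card = (2 * Δ).toNat := by
    rw [Finset.card_erase_of_mem (by simp only [Finset.mem_Icc]; omega), Int.card_Icc]
    omega
  rw [hScard] at hcard
  have hbound : ((k + s : ℕ) : ℝ) ≤ (2 * (Δ : ℝ)) * (2 * (Δ : ℝ)) := by
    have h1 : ((k + s : ℕ) : ℝ) ≤ (((2 * Δ).toNat * (2 * Δ).toNat : ℕ) : ℝ) := by
      exact_mod_cast hcard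
    have h2 : (((2 * Δ).toNat : ℕ) : ℝ) = 2 * (Δ : ℝ) := by
      have h3 : (((2 * Δ).toNat : ℕ) : ℤ) = 2 * Δ := Int.toNat_of_nonneg (by omega)
      exact_mod_cast h3
    rw [Nat.cast_mul, h2] at h1
    exact h1
  rcases eq_or_lt_of_le hΔ1 with h1 | hΔ2
  · -- the case Δ = 1
    have hΔeq : Δ = 1 := h1.symm
    subst hΔeq
    norm_num [Real.one_rpow, Real.logb_one] at hn
    have hn2 : 1 < k + s := by exact_mod_cast hn
    obtain ⟨c, c', hcc'⟩ := Fintype.exists_pair_of_one_lt_card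
      (α := Fin k ⊕ Fin s)
      (by rw [Fintype.card_sum, Fintype.card_fin, Fintype.card_fin]; exact hn2)
    have hT1 : (Tmat D).det = 1 := le_antisymm hTle hTpos
    have hk := hkey hcc'
    rw [hT1, mul_one] at hk
    have hbnd := abs_le.mp (hpairle hcc')
    have hne0 := hpairne hcc'
    have e1 : ((Tmat D).updateRow c (hrow D a)).det = 1
        ∨ ((Tmat D).updateRow c (hrow D a)).det = -1 := by
      have := abs_le.mp (hδle a c); have := hδne a c; omega
    have e2 : ((Tmat D).updateRow c' (hrow D a)).det = 1
        ∨ ((Tmat D).updateRow c' (hrow D a)).det = -1 := by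
      have := abs_le.mp (hδle a c'); have := hδne a c'; omega
    have e3 : ((Tmat D).updateRow c (hrow D b)).det = 1
        ∨ ((Tmat D).updateRow c (hrow D b)).det = -1 := by
      have := abs_le.mp (hδle b c); have := hδne b c; omega
    have e4 : ((Tmat D).updateRow c' (hrow D b)).det = 1
        ∨ ((Tmat D).updateRow c' (hrow D b)).det = -1 := by
      have := abs_le.mp (hδle b c'); have := hδne b c'; omega
    rcases e1 with e1 | e1 <;> rcases e2 with e2 | e2 <;> rcases e3 with e3 | e3 <;>
      rcases e4 with e4 | e4 <;> rw [e1, e2, e3, e4] at hk <;> omega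
  · -- the case Δ ≥ 2
    have h2R : (2 : ℝ) ≤ (Δ : ℝ) := by exact_mod_cast hΔ2
    have hlog0 : 0 ≤ Real.logb 2 (Δ : ℝ) :=
      Real.logb_nonneg (by norm_num) (by linarith)
    have hexp : (5 : ℝ) ≤ (3 : ℝ) + 2 * Real.logb 2 3 := by
      have hl : (1 : ℝ) ≤ Real.logb 2 3 := by
        rw [show (1 : ℝ) = Real.logb 2 2 from (Real.logb_self_eq_one (by norm_num)).symm]
        exact Real.logb_le_logb_of_le (by norm_num) (by norm_num) (by norm_num)
      linarith
    have hrpow : (Δ : ℝ) ^ ((5 : ℝ)) ≤ (Δ : ℝ) ^ ((3 : ℝ) + 2 * Real.logb 2 3) :=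
      Real.rpow_le_rpow_of_exponent_le (by linarith) hexp
    have h5 : (Δ : ℝ) ^ ((5 : ℝ)) = (Δ : ℝ) ^ (5 : ℕ) := by
      rw [← Real.rpow_natCast]
      norm_num
    have hx3 : (8 : ℝ) ≤ (Δ : ℝ) ^ (3 : ℕ) := by nlinarith [h2R]
    have hx2 : (0 : ℝ) ≤ (Δ : ℝ) ^ (2 : ℕ) := sq_nonneg _
    have h8 : 8 * (Δ : ℝ) ^ (2 : ℕ) ≤ (Δ : ℝ) ^ (3 : ℕ) * (Δ : ℝ) ^ (2 : ℕ) :=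
      mul_le_mul_of_nonneg_right hx3 hx2
    have h45 : (2 * (Δ : ℝ)) * (2 * (Δ : ℝ)) ≤ (Δ : ℝ) ^ (5 : ℕ) := by
      nlinarith only [h8, hx2]
    have c1 : ((k + s : ℕ) : ℝ) ≤ (Δ : ℝ) ^ ((5 : ℝ)) := by
      rw [h5]
      exact le_trans hbound h45
    linarith only [hn, hlog0, hrpow, c1]
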